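/- Let a ∈ ℂ be nonzero, let n ∈ ℕ, and let S be a nontrivial finite-dimensional irreducible ñ₊-module with I((t−a)^n)·S = 0. Then the annihilator of S in ñ₊ equals I(t−a). -/

import Mathlib

/- Common framework for formalizing statements from
   "Irreducible modules over affine Kac–Moody algebras which are locally finite
    over the positive part" (Guo–Zhao).

   Conventions:
   * `g` is a finite-dimensional simple complex Lie algebra.
   * The loop algebra `g ⊗ ℂ[t,t⁻¹]` is modelled by the vector space `ℤ →₀ g`
     (`Finsupp.single p x` corresponds to `x ⊗ tᵖ`).
   * The affine algebra `ĝ = g ⊗ ℂ[t,t⁻¹] ⊕ ℂK` is any Lie algebra equipped with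
     an `AffineAlg` structure (a linear equivalence with `(ℤ →₀ g) × ℂ` fixing the
     bracket on generators, where `(0,1)` is the central element `K`).
   * Similarly `t̃g = ĝ ⊕ ℂd` is any Lie algebra with an `AffineAlgD` structure on
     `(ℤ →₀ g) × ℂ × ℂ`, where `(0,1,0) = K` and `(0,0,1) = d`.
   * The current algebra `g ⊗ ℂ[t]` is `Polynomial ℂ ⊗[ℂ] g`, and the positive part
     `ñ₊ = (g ⊗ tℂ[t]) ⊕ (n₊ ⊗ 1)` is any Lie algebra `nt` with an `NtAlg` structure:
     an injective Lie algebra morphism into the current algebra with range `ñ₊`.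
   * Induced modules are specified by structures that pin them down uniquely up to
     isomorphism (`IndModule` via the PBW description `ℂ[d] ⊗ M`, and universal
     properties for induction from `ñ₊`).
-/

open scoped TensorProduct
open Polynomial

noncomputable section

namespace AffinePaper

attribute [local instance 100] LieRing.ofAssociativeRing

variable (g : Type) [LieRing g] [LieAlgebra ℂ g]

/-- The current algebra `g ⊗ ℂ[t]` is a complex Lie algebra. -/
instance : LieAlgebra ℂ (Polynomial ℂ ⊗[ℂ] g) where
  lie_smul c x y := by
    rw [← algebraMap_smul (Polynomial ℂ) c y, ← algebraMap_smul (Polynomial ℂ) c ⁅x, y⁆]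
    exact lie_smul (algebraMap ℂ (Polynomial ℂ) c) x y

/-- The weight space of `ad H` on `g` for a functional `α` on a subalgebra `H`. -/
def wtSpace (H : LieSubalgebra ℂ g) (α : Module.Dual ℂ H) : Submodule ℂ g where
  carrier := {x : g | ∀ h : H, ⁅(h : g), x⁆ = α h • x}
  add_mem' := fun {a b} ha hb h => by rw [lie_add, ha h, hb h, smul_add]
  zero_mem' := fun h => by rw [lie_zero, smul_zero]
  smul_mem' := fun c x hx h => by rw [lie_smul, hx h]; exact smul_comm c (α h) x

/-- `α` is a root of `(g, H)`. -/
def IsRootOf (H : LieSubalgebra ℂ g) (α : Module.Dual ℂ H) : Prop :=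
  α ≠ 0 ∧ wtSpace g H α ≠ ⊥

/-- A triangular decomposition `g = n₋ ⊕ h ⊕ n₊` of `g` relative to a Cartan
subalgebra `H`, given by a positive system `P` of roots. -/
structure TriangularData where
  H : LieSubalgebra ℂ g
  nPos : LieSubalgebra ℂ g
  nNeg : LieSubalgebra ℂ g
  isCartan : H.IsCartanSubalgebra
  P : Set (Module.Dual ℂ H)
  pos_isRoot : ∀ α ∈ P, IsRootOf g H α
  pos_neg : ∀ α, IsRootOf g H α → (α ∈ P ↔ -α ∉ P)
  nPos_eq : nPos.toSubmodule = ⨆ α ∈ P, wtSpace g H α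
  nNeg_eq : nNeg.toSubmodule = ⨆ α ∈ P, wtSpace g H (-α)
  triang : nNeg.toSubmodule ⊔ H.toSubmodule ⊔ nPos.toSubmodule = ⊤

variable {g}

/-- The simple roots of a positive system: the positive roots that are not sums of
two positive roots. -/
def TriangularData.simpleRoots (D : TriangularData g) : Set (Module.Dual ℂ D.H) :=
  {α | α ∈ D.P ∧ ¬∃ β ∈ D.P, ∃ γ ∈ D.P, α = β + γ}

/-- `θ` is the highest root. -/
def TriangularData.IsHighestRoot (D : TriangularData g) (θ : Module.Dual ℂ D.H) : Prop :=
  θ ∈ D.P ∧ ∀ α ∈ D.P, ¬ IsRootOf g D.H (θ + α)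

/-- `lam ∈ h*` is dominant integral: it takes nonnegative integer values on all
coroots (elements `hc = ⁅e, f⁆ ∈ [g_α, g_{-α}]` with `α hc = 2`, `α` positive). -/
def IsDominantIntegral (D : TriangularData g) (lam : Module.Dual ℂ D.H) : Prop :=
  ∀ α ∈ D.P, ∀ (e f : g) (hc : D.H), e ∈ wtSpace g D.H α → f ∈ wtSpace g D.H (-α) →
    ⁅e, f⁆ = (hc : g) → α hc = 2 → ∃ n : ℕ, lam hc = (n : ℂ)

variable (g)

/-- The subspace `I(f) = n₊ ⊗ f ℂ[t] + (h ⊕ n₋) ⊗ t f ℂ[t]` of the current algebra. -/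
def idealI (D : TriangularData g) (f : Polynomial ℂ) : Submodule ℂ (Polynomial ℂ ⊗[ℂ] g) :=
  Submodule.span ℂ
    ({z | ∃ x ∈ D.nPos, ∃ p : Polynomial ℂ, z = (f * p) ⊗ₜ[ℂ] x} ∪
     {z | ∃ x : g, x ∈ D.H.toSubmodule ⊔ D.nNeg.toSubmodule ∧
        ∃ p : Polynomial ℂ, z = (X * f * p) ⊗ₜ[ℂ] x})

/-- The subspace `Σ_{α∈Δ₊∖Π} g_α ⊗ fℂ[t] + Σ_{α∈Π} g_α ⊗ tfℂ[t] +
Σ_{α∈Δ₊∖{θ}} g_{−α} ⊗ tfℂ[t] + g_{−θ} ⊗ t²fℂ[t] + h ⊗ tfℂ[t]` of the current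
algebra (`θ` the highest root); for `f = 1` this is the subspace `K` of Lemma 4.2. -/
def bigK (D : TriangularData g) (θ : Module.Dual ℂ D.H) (f : Polynomial ℂ) :
    Submodule ℂ (Polynomial ℂ ⊗[ℂ] g) :=
  Submodule.span ℂ
    ({z | ∃ α ∈ D.P, α ∉ D.simpleRoots ∧
        ∃ x ∈ wtSpace g D.H α, ∃ p : Polynomial ℂ, z = (f * p) ⊗ₜ[ℂ] x} ∪
     {z | ∃ α ∈ D.simpleRoots,
        ∃ x ∈ wtSpace g D.H α, ∃ p : Polynomial ℂ, z = (X * f * p) ⊗ₜ[ℂ] x} ∪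
     {z | ∃ α ∈ D.P, α ≠ θ ∧
        ∃ x ∈ wtSpace g D.H (-α), ∃ p : Polynomial ℂ, z = (X * f * p) ⊗ₜ[ℂ] x} ∪
     {z | ∃ x ∈ wtSpace g D.H (-θ), ∃ p : Polynomial ℂ, z = (X ^ 2 * f * p) ⊗ₜ[ℂ] x} ∪
     {z | ∃ x ∈ D.H, ∃ p : Polynomial ℂ, z = (X * f * p) ⊗ₜ[ℂ] x})

/-- The subspace of the current algebra corresponding to
`ñ₊ = (g ⊗ tℂ[t]) ⊕ (n₊ ⊗ 1)`. -/
def ntModel (D : TriangularData g) : Submodule ℂ (Polynomial ℂ ⊗[ℂ] g) :=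
  Submodule.span ℂ
    ({z | ∃ (k : ℕ) (x : g), 1 ≤ k ∧ z = (X ^ k : Polynomial ℂ) ⊗ₜ[ℂ] x} ∪
     {z | ∃ x ∈ D.nPos, z = (1 : Polynomial ℂ) ⊗ₜ[ℂ] x})

/-- A realization of the Lie algebra `ñ₊`: a Lie algebra `nt` together with an
injective morphism to the current algebra with range `(g ⊗ tℂ[t]) ⊕ (n₊ ⊗ 1)`. -/
structure NtAlg (D : TriangularData g) (nt : Type) [LieRing nt] [LieAlgebra ℂ nt] where
  ι : nt →ₗ⁅ℂ⁆ Polynomial ℂ ⊗[ℂ] g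
  inj : Function.Injective ι
  range_eq : LinearMap.range (ι.toLinearMap) = ntModel g D

/-- Evaluation of the current algebra at a point `a ∈ ℂ`: `x ⊗ p(t) ↦ p(a) • x`. -/
def ev (a : ℂ) : (Polynomial ℂ ⊗[ℂ] g) →ₗ[ℂ] g :=
  (TensorProduct.lid ℂ g).toLinearMap ∘ₗ
    (TensorProduct.map (Polynomial.aeval a).toLinearMap LinearMap.id)

/-- The canonical embedding of the current algebra `g ⊗ ℂ[t]` into the model
`ℤ →₀ g` of the loop algebra `g ⊗ ℂ[t,t⁻¹]` (sending `x ⊗ tᵏ` to `single k x`). -/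
def toLoop : (Polynomial ℂ ⊗[ℂ] g) →ₗ[ℂ] (ℤ →₀ g) :=
  (Finsupp.lmapDomain g ℂ (Nat.cast : ℕ → ℤ)) ∘ₗ
    (TensorProduct.finsuppScalarLeft ℂ g ℕ).toLinearMap ∘ₗ
    (TensorProduct.congr ((Polynomial.toFinsuppIsoAlg ℂ).toLinearEquiv.trans
      (AddMonoidAlgebra.coeffLinearEquiv ℂ))
      (LinearEquiv.refl ℂ g)).toLinearMap

/-- A weight vector of `ñ₊` (viewed inside the current algebra): a nonzero element
`x ⊗ tᵏ` with `x` in `h` or in a root space. -/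
def IsWeightVec (D : TriangularData g) (w : Polynomial ℂ ⊗[ℂ] g) : Prop :=
  w ≠ 0 ∧ ∃ (k : ℕ) (x : g), w = (X ^ k : Polynomial ℂ) ⊗ₜ[ℂ] x ∧
    (x ∈ D.H ∨ ∃ α, IsRootOf g D.H α ∧ x ∈ wtSpace g D.H α)

/-- An element `z` of a Lie algebra `L` acts locally finitely on a module `V`. -/
def ActsLocallyFinitely (L : Type) [LieRing L] (V : Type) [AddCommGroup V] [Module ℂ V]
    [LieRingModule L V] (z : L) : Prop :=
  ∀ v : V, ∃ W : Submodule ℂ V, v ∈ W ∧ FiniteDimensional ℂ W ∧ ∀ w ∈ W, ⁅z, w⁆ ∈ W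

/-- A realization of the affine Lie algebra `ĝ = (g ⊗ ℂ[t,t⁻¹]) ⊕ ℂK` (without
derivation): a Lie algebra `gh` with a linear equivalence `e` with the model space
`(ℤ →₀ g) × ℂ` such that `e (single p x, 0) = x ⊗ tᵖ`, `e (0,1) = K` is central, and
`[x ⊗ tᵖ, y ⊗ t^q] = [x,y] ⊗ t^{p+q} + p δ_{p+q,0} κ(x,y) K`, `κ` the Killing form. -/
structure AffineAlg (gh : Type) [LieRing gh] [LieAlgebra ℂ gh] where
  e : ((ℤ →₀ g) × ℂ) ≃ₗ[ℂ] gh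
  brkt : ∀ (p q : ℤ) (x y : g),
    ⁅e (Finsupp.single p x, 0), e (Finsupp.single q y, 0)⁆ =
      e (Finsupp.single (p + q) ⁅x, y⁆,
        if p + q = 0 then (p : ℂ) * killingForm ℂ g x y else 0)
  central : ∀ z : gh, ⁅e (0, 1), z⁆ = 0

/-- A realization of the affine Kac–Moody algebra `t̃g = (g ⊗ ℂ[t,t⁻¹]) ⊕ ℂK ⊕ ℂd`:
as in `AffineAlg`, with moreover `e (0,0,1) = d` satisfying `[d, x ⊗ tᵖ] = p x ⊗ tᵖ`. -/
structure AffineAlgD (gt : Type) [LieRing gt] [LieAlgebra ℂ gt] where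
  e : ((ℤ →₀ g) × ℂ × ℂ) ≃ₗ[ℂ] gt
  brkt : ∀ (p q : ℤ) (x y : g),
    ⁅e (Finsupp.single p x, 0, 0), e (Finsupp.single q y, 0, 0)⁆ =
      e (Finsupp.single (p + q) ⁅x, y⁆,
        (if p + q = 0 then (p : ℂ) * killingForm ℂ g x y else 0), 0)
  central : ∀ z : gt, ⁅e (0, 1, 0), z⁆ = 0
  dBrkt : ∀ (p : ℤ) (x : g),
    ⁅e (0, 0, 1), e (Finsupp.single p x, 0, 0)⁆ = e (Finsupp.single p ((p : ℂ) • x), 0, 0)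

variable {g}

/-- `V` is the irreducible highest weight `g`-module with highest weight `lam`:
it is irreducible and has a highest weight vector of weight `lam`. -/
structure IsHWModule (D : TriangularData g) (lam : Module.Dual ℂ D.H) (V : Type)
    [AddCommGroup V] [Module ℂ V] [LieRingModule g V] [LieModule ℂ g V] where
  v₀ : V
  ne : v₀ ≠ 0
  hwN : ∀ x ∈ D.nPos, ⁅x, v₀⁆ = 0
  hwH : ∀ h : D.H, ⁅(h : g), v₀⁆ = lam h • v₀
  irred : IsSimpleOrder (LieSubmodule ℂ g V)

/-- `E` is the evaluation module `E(λ, a) = V₁ ⊗ ⋯ ⊗ V_m` over `ĝ`: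
`(x ⊗ tᵏ) · (v₁ ⊗ ⋯ ⊗ v_m) = Σᵢ aᵢᵏ v₁ ⊗ ⋯ ⊗ (x · vᵢ) ⊗ ⋯ ⊗ v_m`, and `K` acts by `0`. -/
structure EvalModule {gh : Type} [LieRing gh] [LieAlgebra ℂ gh] (A : AffineAlg g gh)
    {m : ℕ} (a : Fin m → ℂ) (V : Fin m → Type) [∀ i, AddCommGroup (V i)]
    [∀ i, Module ℂ (V i)] [∀ i, LieRingModule g (V i)] [∀ i, LieModule ℂ g (V i)]
    (E : Type) [AddCommGroup E] [Module ℂ E] [LieRingModule gh E] [LieModule ℂ gh E] where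
  ψ : E ≃ₗ[ℂ] PiTensorProduct ℂ V
  act : ∀ (k : ℤ) (x : g) (v : ∀ i, V i),
    ⁅A.e (Finsupp.single k x, 0), ψ.symm (PiTensorProduct.tprod ℂ v)⁆ =
      ∑ i, (a i) ^ k • ψ.symm (PiTensorProduct.tprod ℂ (Function.update v i ⁅x, v i⁆))
  kAct : ∀ w : E, ⁅A.e (0, 1), w⁆ = 0

/-- `V` is the `t̃g`-module `M[d] = Ind_{ĝ}^{t̃g} M` induced from a `ĝ`-module `M`.
As a vector space `M[d] = ℂ[d] ⊗ M` (modelled by `ℕ →₀ M`, `single n v = dⁿ ⊗ v`);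
`d` shifts the degree and `ĝ` acts on `d⁰ ⊗ M` as on `M`.  These data determine the
`t̃g`-module structure uniquely. -/
structure IndModule {gh gt : Type} [LieRing gh] [LieAlgebra ℂ gh] [LieRing gt]
    [LieAlgebra ℂ gt] (T : AffineAlgD g gt) (A : AffineAlg g gh)
    (M : Type) [AddCommGroup M] [Module ℂ M] [LieRingModule gh M]
    (V : Type) [AddCommGroup V] [Module ℂ V] [LieRingModule gt V] where
  φ : (ℕ →₀ M) ≃ₗ[ℂ] V
  dAct : ∀ (n : ℕ) (v : M),
    ⁅T.e (0, 0, 1), φ (Finsupp.single n v)⁆ = φ (Finsupp.single (n + 1) v)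
  rest : ∀ (u : (ℤ →₀ g) × ℂ) (v : M),
    ⁅T.e (u.1, u.2, 0), φ (Finsupp.single 0 v)⁆ = φ (Finsupp.single 0 ⁅A.e u, v⁆)

/-- `S` is the `ñ₊`-module `S(η, λ, a) = ℂ v_η ⊗ L(λ₁) ⊗ ⋯ ⊗ L(λ_m)`:
`(x ⊗ p(t)) · (v₁ ⊗ ⋯ ⊗ v_m) = η(x ⊗ p(t)) (v₁ ⊗ ⋯ ⊗ v_m) + Σᵢ p(aᵢ) v₁ ⊗ ⋯ ⊗ (x vᵢ) ⊗ ⋯ ⊗ v_m`. -/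
structure SModule {nt : Type} [LieRing nt] [LieAlgebra ℂ nt] {D : TriangularData g}
    (NT : NtAlg g D nt) (η : nt →ₗ⁅ℂ⁆ ℂ) {m : ℕ} (a : Fin m → ℂ)
    (V : Fin m → Type) [∀ i, AddCommGroup (V i)] [∀ i, Module ℂ (V i)]
    [∀ i, LieRingModule g (V i)]
    (S : Type) [AddCommGroup S] [Module ℂ S] [LieRingModule nt S] where
  ψ : S ≃ₗ[ℂ] PiTensorProduct ℂ V
  act : ∀ (z : nt) (v : ∀ i, V i),
    ⁅z, ψ.symm (PiTensorProduct.tprod ℂ v)⁆ = η z • ψ.symm (PiTensorProduct.tprod ℂ v) +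
      ∑ i, ψ.symm (PiTensorProduct.tprod ℂ (Function.update v i ⁅ev g (a i) (NT.ι z), v i⁆))

/-- `V` is the irreducible highest weight `ĝ`-module with highest weight
`γ ∈ (h ⊕ ℂK)*`. -/
structure HWModuleAff {gh : Type} [LieRing gh] [LieAlgebra ℂ gh] (A : AffineAlg g gh)
    (D : TriangularData g) (γ : Module.Dual ℂ (↥D.H × ℂ)) (V : Type)
    [AddCommGroup V] [Module ℂ V] [LieRingModule gh V] [LieModule ℂ gh V] where
  v₀ : V
  ne : v₀ ≠ 0
  hwLoop : ∀ k : ℕ, 1 ≤ k → ∀ x : g, ⁅A.e (Finsupp.single (k : ℤ) x, 0), v₀⁆ = 0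
  hwN : ∀ x ∈ D.nPos, ⁅A.e (Finsupp.single 0 x, 0), v₀⁆ = 0
  hwH : ∀ (h : D.H) (c : ℂ), ⁅A.e (Finsupp.single 0 (h : g), c), v₀⁆ = γ (h, c) • v₀
  irred : IsSimpleOrder (LieSubmodule ℂ gh V)

/-- `W` is an irreducible Whittaker `ĝ`-module of type `η : ñ₊ → ℂ`. -/
structure WhittakerAff {gh : Type} [LieRing gh] [LieAlgebra ℂ gh] (A : AffineAlg g gh)
    {D : TriangularData g} {nt : Type} [LieRing nt] [LieAlgebra ℂ nt] (NT : NtAlg g D nt)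
    (η : nt →ₗ⁅ℂ⁆ ℂ) (W : Type)
    [AddCommGroup W] [Module ℂ W] [LieRingModule gh W] [LieModule ℂ gh W] where
  v₀ : W
  ne : v₀ ≠ 0
  wh : ∀ z : nt, ⁅A.e (toLoop g (NT.ι z), 0), v₀⁆ = η z • v₀
  irred : IsSimpleOrder (LieSubmodule ℂ gh W)

/-- `MS` is the induced `ĝ`-module `Ind_{ñ₊}^{ĝ} S`, characterized by its universal
property. -/
structure IndFromNt {gh : Type} [LieRing gh] [LieAlgebra ℂ gh] (A : AffineAlg g gh)
    {D : TriangularData g} {nt : Type} [LieRing nt] [LieAlgebra ℂ nt] (NT : NtAlg g D nt)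
    (S : Type) [AddCommGroup S] [Module ℂ S] [LieRingModule nt S]
    (MS : Type) [AddCommGroup MS] [Module ℂ MS] [LieRingModule gh MS]
    [LieModule ℂ gh MS] where
  ι₀ : S →ₗ[ℂ] MS
  compat : ∀ (z : nt) (s : S), ⁅A.e (toLoop g (NT.ι z), 0), ι₀ s⁆ = ι₀ ⁅z, s⁆
  univ : ∀ (W : Type) [AddCommGroup W] [Module ℂ W] [LieRingModule gh W]
    [LieModule ℂ gh W] (f : S →ₗ[ℂ] W),
    (∀ (z : nt) (s : S), ⁅A.e (toLoop g (NT.ι z), 0), f s⁆ = f ⁅z, s⁆) →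
    ∃! F : MS →ₗ⁅ℂ,gh⁆ W, F.toLinearMap ∘ₗ ι₀ = f

/-- `M0` is the universal Whittaker module `M(η) = Ind_{ñ₊}^{ĝ} ℂ_η`, characterized
by its universal property. -/
structure UnivWhittaker {gh : Type} [LieRing gh] [LieAlgebra ℂ gh] (A : AffineAlg g gh)
    {D : TriangularData g} {nt : Type} [LieRing nt] [LieAlgebra ℂ nt] (NT : NtAlg g D nt)
    (η : nt →ₗ⁅ℂ⁆ ℂ) (M0 : Type) [AddCommGroup M0] [Module ℂ M0] [LieRingModule gh M0]
    [LieModule ℂ gh M0] where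
  u₀ : M0
  rel : ∀ z : nt, ⁅A.e (toLoop g (NT.ι z), 0), u₀⁆ = η z • u₀
  univ : ∀ (W : Type) [AddCommGroup W] [Module ℂ W] [LieRingModule gh W]
    [LieModule ℂ gh W] (w : W),
    (∀ z : nt, ⁅A.e (toLoop g (NT.ι z), 0), w⁆ = η z • w) →
    ∃! F : M0 →ₗ⁅ℂ,gh⁆ W, F u₀ = w

variable (g)

/-- A bundled Lie module over a complex Lie algebra `L`. -/
structure LieModOf (L : Type) [LieRing L] [LieAlgebra ℂ L] : Type 1 where
  carrier : Type
  [ac : AddCommGroup carrier]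
  [mo : Module ℂ carrier]
  [lrm : LieRingModule L carrier]
  [lm : LieModule ℂ L carrier]

attribute [instance] LieModOf.ac LieModOf.mo LieModOf.lrm LieModOf.lm

/-! ### Auxiliary material for Statement 7 -/

section Statement7Aux

variable {g : Type} [LieRing g] [LieAlgebra ℂ g]

lemma tmul_bracket (p q : Polynomial ℂ) (x y : g) :
    ⁅p ⊗ₜ[ℂ] x, q ⊗ₜ[ℂ] y⁆ = (p * q) ⊗ₜ[ℂ] ⁅x, y⁆ := rfl

lemma ev_tmul (a : ℂ) (p : Polynomial ℂ) (x : g) : ev g a (p ⊗ₜ[ℂ] x) = p.eval a • x := by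
  simp [ev, Polynomial.aeval_def]

lemma memI_pos (D : TriangularData g) {x : g} (hx : x ∈ D.nPos) (f p : Polynomial ℂ) :
    (f * p) ⊗ₜ[ℂ] x ∈ idealI g D f :=
  Submodule.subset_span (Or.inl ⟨x, hx, p, rfl⟩)

lemma memI_hn (D : TriangularData g) {x : g}
    (hx : x ∈ D.H.toSubmodule ⊔ D.nNeg.toSubmodule) (f p : Polynomial ℂ) :
    (X * f * p) ⊗ₜ[ℂ] x ∈ idealI g D f :=
  Submodule.subset_span (Or.inr ⟨x, hx, p, rfl⟩)

lemma memI_any (D : TriangularData g) (x : g) (f p : Polynomial ℂ) :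
    (X * f * p) ⊗ₜ[ℂ] x ∈ idealI g D f := by
  have hx : x ∈ D.nNeg.toSubmodule ⊔ D.H.toSubmodule ⊔ D.nPos.toSubmodule := by
    rw [D.triang]; trivial
  obtain ⟨y, hy, zz, hz, rfl⟩ := Submodule.mem_sup.mp hx
  rw [TensorProduct.tmul_add]
  refine Submodule.add_mem _ ?_ ?_
  · refine memI_hn D ?_ f p
    rw [sup_comm]; exact hy
  · have := memI_pos D hz f (X * p)
    rwa [show f * (X * p) = X * f * p by ring] at this

lemma idealI_mul_le (D : TriangularData g) (q r : Polynomial ℂ) :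
    idealI g D (q * r) ≤ idealI g D q := by
  refine Submodule.span_le.mpr ?_
  rintro z (⟨x, hx, p, rfl⟩ | ⟨x, hx, p, rfl⟩)
  · have := memI_pos D hx q (r * p)
    rwa [show q * (r * p) = q * r * p by ring] at this
  · have := memI_hn D hx q (r * p)
    rwa [show X * q * (r * p) = X * (q * r) * p by ring] at this

lemma bracket_span_mem {L : Type} [LieRing L] [LieAlgebra ℂ L] {A B : Set L}
    {P : Submodule ℂ L} (h : ∀ u ∈ A, ∀ w ∈ B, ⁅u, w⁆ ∈ P) :
    ∀ u ∈ Submodule.span ℂ A, ∀ w ∈ Submodule.span ℂ B, ⁅u, w⁆ ∈ P := by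
  intro u hu w hw
  induction hu using Submodule.span_induction with
  | mem v hv =>
      induction hw using Submodule.span_induction with
      | mem b hb => exact h v hv b hb
      | zero => rw [lie_zero]; exact P.zero_mem
      | add b c _ _ hb hc => rw [lie_add]; exact P.add_mem hb hc
      | smul t b _ hb => rw [lie_smul]; exact P.smul_mem t hb
  | zero => rw [zero_lie]; exact P.zero_mem
  | add u1 u2 _ _ h1 h2 => rw [add_lie]; exact P.add_mem h1 h2
  | smul t u1 _ h1 => rw [smul_lie]; exact P.smul_mem t h1

lemma memNt_pow (D : TriangularData g) (k : ℕ) (hk : 1 ≤ k) (x : g) :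
    (X ^ k : Polynomial ℂ) ⊗ₜ[ℂ] x ∈ ntModel g D :=
  Submodule.subset_span (Or.inl ⟨k, x, hk, rfl⟩)

lemma memNt_X (D : TriangularData g) (x : g) :
    (X : Polynomial ℂ) ⊗ₜ[ℂ] x ∈ ntModel g D := by
  have := memNt_pow D 1 le_rfl x
  rwa [pow_one] at this

lemma memNt_one (D : TriangularData g) {x : g} (hx : x ∈ D.nPos) :
    (1 : Polynomial ℂ) ⊗ₜ[ℂ] x ∈ ntModel g D :=
  Submodule.subset_span (Or.inr ⟨x, hx, rfl⟩)

lemma memNt_Xmul (D : TriangularData g) (p : Polynomial ℂ) (x : g) :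
    (X * p) ⊗ₜ[ℂ] x ∈ ntModel g D := by
  induction p using Polynomial.induction_on' with
  | add p q hp hq => rw [mul_add, TensorProduct.add_tmul]; exact Submodule.add_mem _ hp hq
  | monomial i c =>
      have h1 : (X : Polynomial ℂ) * Polynomial.monomial i c = c • X ^ (i + 1) := by
        rw [← Polynomial.C_mul_X_pow_eq_monomial, Polynomial.smul_eq_C_mul]; ring
      rw [h1, ← TensorProduct.smul_tmul']
      exact Submodule.smul_mem _ _ (memNt_pow D (i + 1) (Nat.succ_le_succ (Nat.zero_le i)) x)

lemma memNt_poly (D : TriangularData g) {x : g} (hx : x ∈ D.nPos) (p : Polynomial ℂ) :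
    p ⊗ₜ[ℂ] x ∈ ntModel g D := by
  induction p using Polynomial.induction_on' with
  | add p q hp hq => rw [TensorProduct.add_tmul]; exact Submodule.add_mem _ hp hq
  | monomial i c =>
      rw [← Polynomial.C_mul_X_pow_eq_monomial, ← Polynomial.smul_eq_C_mul,
        ← TensorProduct.smul_tmul']
      refine Submodule.smul_mem _ _ ?_
      cases i with
      | zero => rw [pow_zero]; exact memNt_one D hx
      | succ m => exact memNt_pow D (m + 1) (Nat.succ_le_succ (Nat.zero_le m)) x

lemma idealI_le_ntModel (D : TriangularData g) (f : Polynomial ℂ) :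
    idealI g D f ≤ ntModel g D := by
  refine Submodule.span_le.mpr ?_
  rintro z (⟨x, hx, p, rfl⟩ | ⟨x, hx, p, rfl⟩)
  · exact memNt_poly D hx _
  · rw [mul_assoc]
    exact memNt_Xmul D _ x

lemma lie_ntModel_idealI (D : TriangularData g) (q : Polynomial ℂ) :
    ∀ u ∈ ntModel g D, ∀ w ∈ idealI g D q, ⁅u, w⁆ ∈ idealI g D q := by
  refine bracket_span_mem ?_
  rintro u (⟨k, x, hk, rfl⟩ | ⟨x, hx, rfl⟩) w (⟨y, hy, p, rfl⟩ | ⟨y, hy, p, rfl⟩)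
  · obtain ⟨m, rfl⟩ : ∃ m, k = m + 1 := ⟨k - 1, by omega⟩
    rw [tmul_bracket]
    have := memI_any D ⁅x, y⁆ q (X ^ m * p)
    rwa [show X * q * (X ^ m * p) = X ^ (m + 1) * (q * p) by ring] at this
  · obtain ⟨m, rfl⟩ : ∃ m, k = m + 1 := ⟨k - 1, by omega⟩
    rw [tmul_bracket]
    have := memI_any D ⁅x, y⁆ q (X ^ (m + 1) * p)
    rwa [show X * q * (X ^ (m + 1) * p) = X ^ (m + 1) * (X * q * p) by ring] at this
  · rw [tmul_bracket, one_mul]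
    exact memI_pos D (D.nPos.lie_mem hx hy) q p
  · rw [tmul_bracket, one_mul]
    exact memI_any D _ q p

lemma lie_idealI_idealI (D : TriangularData g) (q r : Polynomial ℂ) :
    ∀ u ∈ idealI g D q, ∀ w ∈ idealI g D r, ⁅u, w⁆ ∈ idealI g D (q * r) := by
  refine bracket_span_mem ?_
  rintro u (⟨x, hx, p, rfl⟩ | ⟨x, hx, p, rfl⟩) w (⟨y, hy, p', rfl⟩ | ⟨y, hy, p', rfl⟩)
  · rw [tmul_bracket]
    have := memI_pos (D := D) (D.nPos.lie_mem hx hy) (q * r) (p * p')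
    rwa [show q * r * (p * p') = q * p * (r * p') by ring] at this
  · rw [tmul_bracket]
    have := memI_any D ⁅x, y⁆ (q * r) (p * p')
    rwa [show X * (q * r) * (p * p') = q * p * (X * r * p') by ring] at this
  · rw [tmul_bracket]
    have := memI_any D ⁅x, y⁆ (q * r) (p * p')
    rwa [show X * (q * r) * (p * p') = X * q * p * (r * p') by ring] at this
  · rw [tmul_bracket]
    have := memI_any D ⁅x, y⁆ (q * r) (X * p * p')
    rwa [show X * (q * r) * (X * p * p') = X * q * p * (X * r * p') by ring] at this

lemma ev_idealI_eq_zero (D : TriangularData g) (a : ℂ) {w : Polynomial ℂ ⊗[ℂ] g}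
    (hw : w ∈ idealI g D (X - C a)) : ev g a w = 0 := by
  have hle : idealI g D (X - C a) ≤ LinearMap.ker (ev g a) := by
    refine Submodule.span_le.mpr ?_
    rintro z (⟨x, hx, p, rfl⟩ | ⟨x, hx, p, rfl⟩) <;>
      simp [LinearMap.mem_ker, ev_tmul]
  exact LinearMap.mem_ker.mp (hle hw)

lemma mem_idealI_of_ev_zero (D : TriangularData g) {a : ℂ} (ha : a ≠ 0)
    {w : Polynomial ℂ ⊗[ℂ] g} (hw : w ∈ ntModel g D) (hev : ev g a w = 0) :
    w ∈ idealI g D (X - C a) := by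
  have main : ∃ xp ∈ D.nPos, ∃ x₁ : g,
      w - (1 : Polynomial ℂ) ⊗ₜ[ℂ] xp - (X : Polynomial ℂ) ⊗ₜ[ℂ] x₁ ∈ idealI g D (X - C a) := by
    clear hev
    induction hw using Submodule.span_induction with
    | mem u hu =>
        rcases hu with ⟨k, x, hk, rfl⟩ | ⟨x, hx, rfl⟩
        · obtain ⟨m, rfl⟩ : ∃ m, k = m + 1 := ⟨k - 1, by omega⟩
          refine ⟨0, Submodule.zero_mem _, a ^ m • x, ?_⟩
          obtain ⟨qq, hqq⟩ : (X - C a) ∣ (X : Polynomial ℂ) ^ m - C (a ^ m) := by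
            have h := Polynomial.X_sub_C_dvd_sub_C_eval (a := a) (p := (X : Polynomial ℂ) ^ m)
            simpa using h
          have hpoly : (X : Polynomial ℂ) ^ (m + 1) - C (a ^ m) * X = X * (X - C a) * qq := by
            calc (X : Polynomial ℂ) ^ (m + 1) - C (a ^ m) * X
                = X * ((X : Polynomial ℂ) ^ m - C (a ^ m)) := by ring
              _ = X * ((X - C a) * qq) := by rw [hqq]
              _ = X * (X - C a) * qq := by ring
          have heq : (X ^ (m + 1) : Polynomial ℂ) ⊗ₜ[ℂ] x - (1 : Polynomial ℂ) ⊗ₜ[ℂ] (0 : g)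
              - (X : Polynomial ℂ) ⊗ₜ[ℂ] (a ^ m • x)
              = ((X : Polynomial ℂ) ^ (m + 1) - C (a ^ m) * X) ⊗ₜ[ℂ] x := by
            rw [TensorProduct.tmul_zero, sub_zero, TensorProduct.tmul_smul,
              TensorProduct.smul_tmul', Polynomial.smul_eq_C_mul,
              ← TensorProduct.sub_tmul]
          rw [heq, hpoly]
          exact memI_any D x (X - C a) qq
        · refine ⟨x, hx, 0, ?_⟩
          rw [TensorProduct.tmul_zero, sub_zero, sub_self]
          exact Submodule.zero_mem _
    | zero =>
        refine ⟨0, Submodule.zero_mem _, 0, ?_⟩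
        rw [TensorProduct.tmul_zero, TensorProduct.tmul_zero, sub_zero, sub_zero]
        exact Submodule.zero_mem _
    | add u v _ _ ihu ihv =>
        obtain ⟨x1, h1, y1, m1⟩ := ihu
        obtain ⟨x2, h2, y2, m2⟩ := ihv
        refine ⟨x1 + x2, Submodule.add_mem _ h1 h2, y1 + y2, ?_⟩
        rw [TensorProduct.tmul_add, TensorProduct.tmul_add]
        have := Submodule.add_mem _ m1 m2
        convert this using 1
        abel
    | smul c u _ ihu =>
        obtain ⟨x1, h1, y1, m1⟩ := ihu
        refine ⟨c • x1, Submodule.smul_mem _ _ h1, c • y1, ?_⟩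
        rw [TensorProduct.tmul_smul, TensorProduct.tmul_smul, ← smul_sub, ← smul_sub]
        exact Submodule.smul_mem _ _ m1
  obtain ⟨xp, hxp, x₁, hmem⟩ := main
  have h0 : -xp = a • x₁ := by
    have h := ev_idealI_eq_zero D a hmem
    rw [map_sub, map_sub, ev_tmul, ev_tmul, hev, Polynomial.eval_one, Polynomial.eval_X,
      one_smul, zero_sub, sub_eq_zero] at h
    exact h
  have hxpeq : xp = -(a • x₁) := by rw [← h0, neg_neg]
  have hx1mem : x₁ ∈ D.nPos := by
    have hx1 : a⁻¹ • (-xp) = x₁ := by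
      rw [inv_smul_eq_iff₀ ha]; exact h0
    rw [← hx1]
    exact Submodule.smul_mem _ _ (Submodule.neg_mem _ hxp)
  have hsplit : w = (w - (1 : Polynomial ℂ) ⊗ₜ[ℂ] xp - (X : Polynomial ℂ) ⊗ₜ[ℂ] x₁)
      + ((1 : Polynomial ℂ) ⊗ₜ[ℂ] xp + (X : Polynomial ℂ) ⊗ₜ[ℂ] x₁) := by abel
  have hlast : (1 : Polynomial ℂ) ⊗ₜ[ℂ] xp + (X : Polynomial ℂ) ⊗ₜ[ℂ] x₁
      = ((X - C a) * 1) ⊗ₜ[ℂ] x₁ := by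
    rw [hxpeq, mul_one]
    rw [TensorProduct.tmul_neg, TensorProduct.tmul_smul, TensorProduct.smul_tmul',
      Polynomial.smul_eq_C_mul, mul_one, TensorProduct.sub_tmul]
    abel
  rw [hsplit]
  refine Submodule.add_mem _ hmem ?_
  rw [hlast]
  exact memI_pos D hx1mem (X - C a) 1

lemma lie_top_top_eq_top [LieAlgebra.IsSimple ℂ g] :
    (⁅(⊤ : LieIdeal ℂ g), (⊤ : LieIdeal ℂ g)⁆ : LieIdeal ℂ g) = ⊤ := by
  rcases LieAlgebra.IsSimple.eq_bot_or_eq_top (⁅(⊤ : LieIdeal ℂ g), (⊤ : LieIdeal ℂ g)⁆ :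
      LieIdeal ℂ g) with h | h
  · exfalso
    refine LieAlgebra.IsSimple.non_abelian (R := ℂ) (L := g) ⟨fun x y => ?_⟩
    have hmem : ⁅x, y⁆ ∈ (⁅(⊤ : LieIdeal ℂ g), (⊤ : LieIdeal ℂ g)⁆ : LieIdeal ℂ g) :=
      LieSubmodule.lie_mem_lie trivial trivial
    rw [h] at hmem
    exact (LieSubmodule.mem_bot _).mp hmem
  · exact h

lemma mem_br [LieAlgebra.IsSimple ℂ g] (D : TriangularData g) (a : ℂ)
    (q : Polynomial ℂ) (x : g) :
    (X ^ 2 * ((X - C a) * q)) ⊗ₜ[ℂ] x ∈ Submodule.span ℂ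
      {z : Polynomial ℂ ⊗[ℂ] g | ∃ u ∈ ntModel g D, ∃ w ∈ idealI g D (X - C a), z = ⁅u, w⁆} := by
  have hx : x ∈ Submodule.span ℂ
      {m : g | ∃ u ∈ (⊤ : LieIdeal ℂ g), ∃ v ∈ (⊤ : LieIdeal ℂ g), ⁅u, v⁆ = m} := by
    rw [← LieSubmodule.lieIdeal_oper_eq_linear_span']
    rw [LieSubmodule.mem_toSubmodule, lie_top_top_eq_top]
    trivial
  induction hx using Submodule.span_induction with
  | mem v hv =>
      obtain ⟨u1, -, u2, -, rfl⟩ := hv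
      refine Submodule.subset_span ⟨(X : Polynomial ℂ) ⊗ₜ[ℂ] u1, memNt_X D u1,
        (X * (X - C a) * q) ⊗ₜ[ℂ] u2, memI_any D u2 _ q, ?_⟩
      rw [tmul_bracket]
      congr 1
      ring
  | zero => rw [TensorProduct.tmul_zero]; exact Submodule.zero_mem _
  | add y z _ _ hy hz => rw [TensorProduct.tmul_add]; exact Submodule.add_mem _ hy hz
  | smul c y _ hy => rw [TensorProduct.tmul_smul]; exact Submodule.smul_mem _ c hy

lemma idealI_le_br_sup [LieAlgebra.IsSimple ℂ g] (D : TriangularData g) {a : ℂ}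
    (ha : a ≠ 0) {n : ℕ} (hn : 1 ≤ n) :
    idealI g D (X - C a) ≤
      Submodule.span ℂ
        {z : Polynomial ℂ ⊗[ℂ] g | ∃ u ∈ ntModel g D, ∃ w ∈ idealI g D (X - C a), z = ⁅u, w⁆} ⊔
      idealI g D ((X - C a) ^ n) := by
  obtain ⟨m, rfl⟩ : ∃ m, n = m + 1 := ⟨n - 1, by omega⟩
  have hcop : IsCoprime ((X : Polynomial ℂ) ^ 2) ((X - C a) ^ m) := by
    refine IsCoprime.pow ?_
    refine ⟨C a⁻¹, -C a⁻¹, ?_⟩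
    calc C a⁻¹ * X + -C a⁻¹ * (X - C a) = C a⁻¹ * C a := by ring
      _ = C (a⁻¹ * a) := by rw [← Polynomial.C_mul]
      _ = 1 := by rw [inv_mul_cancel₀ ha, Polynomial.C_1]
  obtain ⟨A, B, hAB⟩ := hcop
  refine Submodule.span_le.mpr ?_
  rintro z (⟨x, hx, p, rfl⟩ | ⟨x, hx, p, rfl⟩)
  · have key : (X - C a) * p
        = X ^ 2 * ((X - C a) * (A * p)) + (X - C a) ^ (m + 1) * (B * p) := by
      have h1 : (X - C a) * p = (A * X ^ 2 + B * (X - C a) ^ m) * ((X - C a) * p) := by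
        rw [hAB, one_mul]
      rw [h1]; ring
    rw [key, TensorProduct.add_tmul]
    exact Submodule.add_mem _ (Submodule.mem_sup_left (mem_br D a (A * p) x))
      (Submodule.mem_sup_right (memI_pos D hx ((X - C a) ^ (m + 1)) (B * p)))
  · have key : X * (X - C a) * p
        = X ^ 2 * ((X - C a) * (A * (X * p))) + X * (X - C a) ^ (m + 1) * (B * p) := by
      have h1 : X * (X - C a) * p
          = (A * X ^ 2 + B * (X - C a) ^ m) * (X * (X - C a) * p) := by
        rw [hAB, one_mul]
      rw [h1]; ring
    rw [key, TensorProduct.add_tmul]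
    exact Submodule.add_mem _ (Submodule.mem_sup_left (mem_br D a (A * (X * p)) x))
      (Submodule.mem_sup_right (memI_any D x ((X - C a) ^ (m + 1)) (B * p)))

/-- The key linear-algebra lemma (invariance + trace argument): if `v` is a common
eigenvector for a submodule `A` of endomorphisms (with eigenvalue function `c`), and `y`
is an endomorphism with `⁅y, A⁆ ⊆ A`, then every bracket `⁅y, z⁆` with `z ∈ A` kills `v`. -/
lemma eig_bracket_apply_zero {V : Type} [AddCommGroup V] [Module ℂ V] [FiniteDimensional ℂ V]
    (A : Submodule ℂ (Module.End ℂ V)) (c : Module.End ℂ V → ℂ) {v : V} (hv : v ≠ 0)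
    (heig : ∀ z ∈ A, z v = c z • v) (y : Module.End ℂ V) (hy : ∀ z ∈ A, ⁅y, z⁆ ∈ A) :
    ∀ z ∈ A, ⁅y, z⁆ v = 0 := by
  let U : ℕ → Submodule ℂ V := fun k => Submodule.span ℂ ((fun j => (y ^ j) v) '' Set.Iic k)
  have hUmono : Monotone U := fun i j hij =>
    Submodule.span_mono (Set.image_mono (Set.Iic_subset_Iic.mpr hij))
  have hUgen : ∀ {j k : ℕ}, j ≤ k → (y ^ j) v ∈ U k := fun {j k} hj =>
    Submodule.subset_span ⟨j, hj, rfl⟩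
  have hv0 : v ∈ U 0 := by
    have := hUgen (le_refl 0)
    rwa [pow_zero, Module.End.one_apply] at this
  have hyU : ∀ k, U k ≤ (U (k + 1)).comap y := by
    intro k
    refine Submodule.span_le.mpr ?_
    rintro _ ⟨j, hj, rfl⟩
    show y ((y ^ j) v) ∈ U (k + 1)
    have hpow : y ((y ^ j) v) = (y ^ (j + 1)) v := by
      rw [pow_succ']; rfl
    rw [hpow]
    exact hUgen (by simpa using Nat.succ_le_succ hj)
  have hcomm : ∀ (z : Module.End ℂ V) (u : V), z (y u) = y (z u) + ⁅z, y⁆ u := by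
    intro z u
    have h1 : z * y = y * z + ⁅z, y⁆ := by rw [Ring.lie_def]; noncomm_ring
    calc z (y u) = (z * y) u := rfl
      _ = (y * z + ⁅z, y⁆) u := by rw [h1]
      _ = y (z u) + ⁅z, y⁆ u := rfl
  have hzyA : ∀ z ∈ A, ⁅z, y⁆ ∈ A := by
    intro z hz
    rw [← lie_skew]
    exact A.neg_mem (hy z hz)
  -- triangularity on the generators
  have hstep : ∀ k, ∀ z ∈ A, z ((y ^ (k + 1)) v) - c z • ((y ^ (k + 1)) v) ∈ U k := by
    intro k
    induction k with
    | zero =>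
        intro z hz
        have e1 : z ((y ^ 1) v) = c z • ((y ^ 1) v) + c ⁅z, y⁆ • v := by
          rw [pow_one, hcomm z v, heig z hz, heig _ (hzyA z hz), map_smul]
        rw [e1]
        have : c z • ((y ^ 1) v) + c ⁅z, y⁆ • v - c z • ((y ^ 1) v) = c ⁅z, y⁆ • v := by abel
        rw [this]
        exact Submodule.smul_mem _ _ hv0
    | succ k ih =>
        intro z hz
        have hpow : (y ^ (k + 2)) v = y ((y ^ (k + 1)) v) := by
          rw [pow_succ']; rfl
        have e1 : z ((y ^ (k + 2)) v)
            = y (z ((y ^ (k + 1)) v)) + ⁅z, y⁆ ((y ^ (k + 1)) v) := by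
          rw [hpow, hcomm]
        have e2 : z ((y ^ (k + 2)) v) - c z • ((y ^ (k + 2)) v)
            = y (z ((y ^ (k + 1)) v) - c z • ((y ^ (k + 1)) v))
              + (⁅z, y⁆ ((y ^ (k + 1)) v) - c ⁅z, y⁆ • ((y ^ (k + 1)) v))
              + c ⁅z, y⁆ • ((y ^ (k + 1)) v) := by
          rw [e1, map_sub, map_smul, hpow]
          abel
        rw [e2]
        refine Submodule.add_mem _ (Submodule.add_mem _ ?_ ?_) ?_
        · exact Submodule.mem_comap.mp (hyU k (ih z hz))
        · exact hUmono (Nat.le_succ k) (ih _ (hzyA z hz))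
        · exact Submodule.smul_mem _ _ (hUgen (le_refl (k + 1)))
  -- on spans
  have hNU0 : ∀ z ∈ A, ∀ u ∈ U 0, z u - c z • u = 0 := by
    intro z hz u hu
    induction hu using Submodule.span_induction with
    | mem b hb =>
        obtain ⟨j, hj, rfl⟩ := hb
        have hj0 : j = 0 := Nat.le_zero.mp hj
        subst hj0
        simp only [pow_zero, Module.End.one_apply]
        rw [heig z hz, sub_self]
    | zero => rw [map_zero, smul_zero, sub_zero]
    | add b b' _ _ hb hb' =>
        rw [map_add, smul_add]
        rw [show z b + z b' - (c z • b + c z • b') = (z b - c z • b) + (z b' - c z • b') by abel,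
          hb, hb', add_zero]
    | smul t b _ hb =>
        rw [map_smul, ← smul_comm t (c z) b, ← smul_sub, hb, smul_zero]
  have hNU : ∀ k, ∀ z ∈ A, ∀ u ∈ U (k + 1), z u - c z • u ∈ U k := by
    intro k z hz u hu
    induction hu using Submodule.span_induction with
    | mem b hb =>
        obtain ⟨j, hj, rfl⟩ := hb
        cases j with
        | zero =>
            simp only [pow_zero, Module.End.one_apply]
            rw [heig z hz, sub_self]
            exact Submodule.zero_mem _
        | succ i =>
            have hj' : i + 1 ≤ k + 1 := hj
            exact hUmono (by omega) (hstep i z hz)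
    | zero => rw [map_zero, smul_zero, sub_zero]; exact Submodule.zero_mem _
    | add b b' _ _ hb hb' =>
        rw [map_add, smul_add]
        rw [show z b + z b' - (c z • b + c z • b') = (z b - c z • b) + (z b' - c z • b') by abel]
        exact Submodule.add_mem _ hb hb'
    | smul t b _ hb =>
        rw [map_smul, ← smul_comm t (c z) b, ← smul_sub]
        exact Submodule.smul_mem _ _ hb
  -- nilpotency
  have hnil : ∀ k, ∀ z ∈ A, ∀ u ∈ U k,
      (((z - c z • (1 : Module.End ℂ V)) ^ (k + 1))) u = 0 := by
    intro k
    induction k with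
    | zero =>
        intro z hz u hu
        rw [pow_one]
        have : (z - c z • (1 : Module.End ℂ V)) u = z u - c z • u := by
          simp [LinearMap.sub_apply]
        rw [this]
        exact hNU0 z hz u hu
    | succ k ih =>
        intro z hz u hu
        have h1 : ((z - c z • (1 : Module.End ℂ V)) ^ (k + 2)) u
            = ((z - c z • (1 : Module.End ℂ V)) ^ (k + 1))
              ((z - c z • (1 : Module.End ℂ V)) u) := by
          rw [pow_succ]; rfl
        rw [h1]
        have h2 : (z - c z • (1 : Module.End ℂ V)) u = z u - c z • u := by
          simp [LinearMap.sub_apply]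
        rw [h2]
        exact ih z hz _ (hNU k z hz u hu)
  -- stabilization
  obtain ⟨ms, hms⟩ := monotone_stabilizes_iff_noetherian.mpr inferInstance ⟨U, hUmono⟩
  set W : Submodule ℂ V := U ms with hW
  have hUms : ∀ k, ms ≤ k → U k = W := fun k hk => (hms k hk).symm
  have hyW : ∀ u ∈ W, y u ∈ W := by
    intro u hu
    have := Submodule.mem_comap.mp (hyU ms hu)
    rwa [hUms (ms + 1) (Nat.le_succ ms)] at this
  have hzW : ∀ z ∈ A, ∀ u ∈ W, z u ∈ W := by
    intro z hz u hu
    have hu' : u ∈ U (ms + 1) := by rw [hUms (ms + 1) (Nat.le_succ ms)]; exact hu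
    have h1 := hNU ms z hz u hu'
    have h2 : z u = (z u - c z • u) + c z • u := by abel
    rw [h2]
    exact Submodule.add_mem _ h1 (Submodule.smul_mem _ _ hu)
  intro z hz
  set B : Module.End ℂ V := ⁅y, z⁆ with hB
  have hBA : B ∈ A := hy z hz
  -- restrict the endomorphisms to W
  have hBW : ∀ u ∈ W, B u ∈ W := hzW B hBA
  have hzW' : ∀ u ∈ W, z u ∈ W := hzW z hz
  have hnB : ∀ u ∈ W, (B - c B • (1 : Module.End ℂ V)) u ∈ W := by
    intro u hu
    have : (B - c B • (1 : Module.End ℂ V)) u = B u - c B • u := by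
      simp [LinearMap.sub_apply]
    rw [this]
    exact Submodule.sub_mem _ (hBW u hu) (Submodule.smul_mem _ _ hu)
  -- trace of B on W vanishes (it is a commutator of endomorphisms preserving W)
  have htr0 : LinearMap.trace ℂ ↥W (B.restrict hBW) = 0 := by
    have hcom : B.restrict hBW = y.restrict hyW * z.restrict hzW' -
        z.restrict hzW' * y.restrict hyW := by
      ext u
      have : B (u : V) = y (z u) - z (y u) := by rw [hB, Ring.lie_def]; rfl
      simp only [LinearMap.sub_apply, Module.End.mul_apply, LinearMap.restrict_coe_apply,
        AddSubgroupClass.coe_sub]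
      rw [this]
    rw [hcom, map_sub, LinearMap.trace_mul_comm, sub_self]
  -- trace of B on W equals c B * dim W
  have hdec : B.restrict hBW
      = c B • (1 : Module.End ℂ ↥W) + (B - c B • (1 : Module.End ℂ V)).restrict hnB := by
    ext u
    simp only [LinearMap.add_apply, LinearMap.smul_apply, Module.End.one_apply,
      LinearMap.restrict_coe_apply, LinearMap.sub_apply, Submodule.coe_add,
      SetLike.val_smul]
    abel
  have hnilres : IsNilpotent ((B - c B • (1 : Module.End ℂ V)).restrict hnB) := by
    refine ⟨ms + 1, ?_⟩
    ext u
    rw [Module.End.pow_restrict]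
    have := hnil ms B hBA (u : V) u.2
    simp only [LinearMap.restrict_coe_apply, LinearMap.zero_apply, ZeroMemClass.coe_zero]
    exact this
  have htrnil : LinearMap.trace ℂ ↥W ((B - c B • (1 : Module.End ℂ V)).restrict hnB) = 0 := by
    have := LinearMap.isNilpotent_trace_of_isNilpotent hnilres
    exact this.eq_zero
  have htr : (0 : ℂ) = c B * (Module.finrank ℂ ↥W : ℂ) := by
    calc (0 : ℂ) = LinearMap.trace ℂ ↥W (B.restrict hBW) := htr0.symm
      _ = c B * (Module.finrank ℂ ↥W : ℂ) := by
          rw [hdec, map_add, htrnil, add_zero, map_smul, LinearMap.trace_one, smul_eq_mul]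
  have hvW : v ∈ W := hUmono (Nat.zero_le ms) hv0
  have hfr : (Module.finrank ℂ ↥W : ℂ) ≠ 0 := by
    refine Nat.cast_ne_zero.mpr ?_
    have : Nontrivial ↥W := ⟨⟨v, hvW⟩, 0, fun hcon => hv (by simpa using congrArg Subtype.val hcon)⟩
    exact Module.finrank_pos.ne'
  have hcB : c B = 0 := by
    rcases mul_eq_zero.mp htr.symm with h | h
    · exact h
    · exact absurd h hfr
  rw [heig B hBA, hcB, zero_smul]

end Statement7Aux

/-- for `a ≠ 0`, `n ≥ 1` and a nontrivial finite-dimensional irreducible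
`ñ₊`-module `S` with `I((t-a)ⁿ) S = 0`, the annihilator of `S` in `ñ₊` is exactly
`I(t-a)`. -/
theorem statement7 (g : Type) [LieRing g] [LieAlgebra ℂ g] [FiniteDimensional ℂ g]
    [LieAlgebra.IsSimple ℂ g] (D : TriangularData g)
    (nt : Type) [LieRing nt] [LieAlgebra ℂ nt] (NT : NtAlg g D nt)
    (a : ℂ) (ha : a ≠ 0) (n : ℕ) (hn : 1 ≤ n)
    (S : Type) [AddCommGroup S] [Module ℂ S] [LieRingModule nt S] [LieModule ℂ nt S]
    [FiniteDimensional ℂ S]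
    (hnontriv : ∃ (z : nt) (s : S), ⁅z, s⁆ ≠ 0)
    (hirr : IsSimpleOrder (LieSubmodule ℂ nt S))
    (hann : ∀ z : nt, NT.ι z ∈ idealI g D ((X - C a) ^ n) → ∀ s : S, ⁅z, s⁆ = 0) :
    ∀ z : nt, (∀ s : S, ⁅z, s⁆ = 0) ↔ NT.ι z ∈ idealI g D (X - C a) := by
  classical
  obtain ⟨z0, s0, hz0⟩ := hnontriv
  haveI : Nontrivial S := ⟨⟨⁅z0, s0⁆, 0, hz0⟩⟩
  set ρ : nt →ₗ⁅ℂ⁆ Module.End ℂ S := LieModule.toEnd ℂ nt S with hρdef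
  have hρ_apply : ∀ (w : nt) (s : S), (ρ w) s = ⁅w, s⁆ := fun w s => rfl
  have hι_mem : ∀ z : nt, NT.ι z ∈ ntModel g D := fun z => by
    rw [← NT.range_eq]; exact LinearMap.mem_range_self _ z
  have hι_surj : ∀ w ∈ ntModel g D, ∃ z : nt, NT.ι z = w := by
    intro w hw
    rw [← NT.range_eq] at hw
    exact hw
  -- bracket stability lemmas, pulled back through ι
  have hNbr : ∀ (u w : nt) (q : Polynomial ℂ), NT.ι w ∈ idealI g D q →
      NT.ι ⁅u, w⁆ ∈ idealI g D q := by
    intro u w q hw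
    rw [LieHom.map_lie]
    exact lie_ntModel_idealI D q _ (hι_mem u) _ hw
  have hN2 : ∀ (u w : nt) (q r : Polynomial ℂ), NT.ι u ∈ idealI g D q →
      NT.ι w ∈ idealI g D r → NT.ι ⁅u, w⁆ ∈ idealI g D (q * r) := by
    intro u w q r hu hw
    rw [LieHom.map_lie]
    exact lie_idealI_idealI D q r _ hu _ hw
  have hkill : ∀ (w : nt) (k : ℕ), n ≤ k → NT.ι w ∈ idealI g D ((X - C a) ^ k) → ρ w = 0 := by
    intro w k hk hw
    have hw' : NT.ι w ∈ idealI g D ((X - C a) ^ n) := by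
      obtain ⟨j, rfl⟩ := Nat.exists_eq_add_of_le hk
      refine idealI_mul_le D ((X - C a) ^ n) ((X - C a) ^ j) ?_
      rw [← pow_add]
      exact hw
    ext s
    rw [hρ_apply]
    exact hann w hw' s
  -- the image of the preimage of `I(t-a)` inside `End S`
  let Asub : Submodule ℂ (Module.End ℂ S) :=
    Submodule.map ρ.toLinearMap ((idealI g D (X - C a)).comap NT.ι.toLinearMap)
  have hAmem : ∀ e : Module.End ℂ S, e ∈ Asub ↔
      ∃ z : nt, NT.ι z ∈ idealI g D (X - C a) ∧ ρ z = e := by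
    intro e
    constructor
    · rintro ⟨z, hz, rfl⟩; exact ⟨z, hz, rfl⟩
    · rintro ⟨z, hz, rfl⟩; exact ⟨z, hz, rfl⟩
  let 𝔞 : LieSubalgebra ℂ (Module.End ℂ S) :=
    { Asub with
      lie_mem' := by
        intro x y hx hy
        obtain ⟨z1, hz1, rfl⟩ := (hAmem x).mp hx
        obtain ⟨z2, hz2, rfl⟩ := (hAmem y).mp hy
        refine (hAmem _).mpr ⟨⁅z1, z2⁆, ?_, LieHom.map_lie ρ z1 z2⟩
        have h2 := hN2 z1 z2 _ _ hz1 hz2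
        exact idealI_mul_le D (X - C a) (X - C a) h2 }
  have hamem : ∀ e : Module.End ℂ S, e ∈ 𝔞 ↔ e ∈ Asub := fun e => Iff.rfl
  haveI hfin𝔞 : FiniteDimensional ℂ ↥𝔞 := inferInstanceAs (FiniteDimensional ℂ ↥Asub)
  haveI : IsNoetherian ℂ ↥𝔞 := IsNoetherian.iff_fg.mpr inferInstance
  -- 𝔞 is a nilpotent Lie algebra
  haveI hnilp : LieRing.IsNilpotent ↥𝔞 := by
    rw [LieAlgebra.isNilpotent_iff_forall (R := ℂ)]
    intro x
    refine ⟨n, ?_⟩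
    have adlem : ∀ (k : ℕ) (y : ↥𝔞), ∃ w : nt,
        NT.ι w ∈ idealI g D ((X - C a) ^ (k + 1)) ∧
        ρ w = (((LieAlgebra.ad ℂ ↥𝔞 x) ^ k) y : Module.End ℂ S) := by
      intro k
      induction k with
      | zero =>
          intro y
          obtain ⟨z, hz, hρz⟩ := (hAmem _).mp y.2
          refine ⟨z, by rwa [zero_add, pow_one], ?_⟩
          rw [pow_zero, Module.End.one_apply, hρz]
      | succ k ih =>
          intro y
          obtain ⟨w, hw, hρw⟩ := ih y
          obtain ⟨zx, hzx, hρzx⟩ := (hAmem _).mp x.2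
          refine ⟨⁅zx, w⁆, ?_, ?_⟩
          · have h2 := hN2 zx w (X - C a) ((X - C a) ^ (k + 1)) hzx hw
            rwa [show (X - C a) * (X - C a) ^ (k + 1) = (X - C a) ^ (k + 1 + 1) by ring] at h2
          · rw [LieHom.map_lie, hρzx, hρw]
            have h3 : ((LieAlgebra.ad ℂ ↥𝔞 x) ^ (k + 1)) y
                = ⁅x, ((LieAlgebra.ad ℂ ↥𝔞 x) ^ k) y⁆ := by
              rw [pow_succ']; rfl
            rw [h3]
            rfl
    refine LinearMap.ext fun y => ?_
    obtain ⟨w, hw, hρw⟩ := adlem n y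
    have hz : ρ w = 0 := hkill w (n + 1) (Nat.le_succ n) hw
    have h0 : (((LieAlgebra.ad ℂ ↥𝔞 x) ^ n) y : Module.End ℂ S) = 0 := by
      rw [← hρw, hz]
    rw [LinearMap.zero_apply]
    refine Subtype.ext ?_
    rw [h0]
    simp
  -- existence of a common eigenvector
  obtain ⟨χfun, hχ⟩ : ∃ χfun : ↥𝔞 → ℂ, LieModule.genWeightSpace S χfun ≠ ⊥ := by
    by_contra hcon
    push_neg at hcon
    have htop := LieModule.iSup_genWeightSpace_eq_top ℂ ↥𝔞 S
    have hbot : (⊤ : LieSubmodule ℂ ↥𝔞 S) = ⊥ := by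
      rw [← htop]
      simp [hcon]
    have hmem : ⁅z0, s0⁆ ∈ (⊥ : LieSubmodule ℂ ↥𝔞 S) := by
      rw [← hbot]; trivial
    exact hz0 ((LieSubmodule.mem_bot _).mp hmem)
  obtain ⟨v, hv0, hveig⟩ :=
    LieModule.exists_forall_lie_eq_smul ℂ ↥𝔞 S (⟨χfun, hχ⟩ : LieModule.Weight ℂ ↥𝔞 S)
  -- the eigenvalue function
  obtain ⟨cfun, heig⟩ : ∃ c : Module.End ℂ S → ℂ, ∀ e ∈ Asub, e v = c e • v := by
    refine ⟨fun e => if h : e ∈ Asub then (⟨χfun, hχ⟩ : LieModule.Weight ℂ ↥𝔞 S) ⟨e, h⟩ else 0, ?_⟩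
    intro e he
    simp only [dif_pos he]
    exact hveig ⟨e, he⟩
  -- every element of the ideal kills `v`
  have hv_killed : ∀ w : nt, NT.ι w ∈ idealI g D (X - C a) → ⁅w, v⁆ = 0 := by
    intro w hw
    have hsup := idealI_le_br_sup D ha hn hw
    obtain ⟨b, hb, k', hk', hsum⟩ := Submodule.mem_sup.mp hsup
    have claim : ∀ b' ∈ Submodule.span ℂ
        {z : Polynomial ℂ ⊗[ℂ] g | ∃ u ∈ ntModel g D,
          ∃ w' ∈ idealI g D (X - C a), z = ⁅u, w'⁆},
        ∃ zb : nt, NT.ι zb = b' ∧ (ρ zb) v = 0 := by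
      intro b' hb'
      induction hb' using Submodule.span_induction with
      | mem u hu =>
          obtain ⟨u1, hu1, w1, hw1, rfl⟩ := hu
          obtain ⟨zu, rfl⟩ := hι_surj u1 hu1
          obtain ⟨zw, rfl⟩ := hι_surj w1 (idealI_le_ntModel D _ hw1)
          refine ⟨⁅zu, zw⁆, LieHom.map_lie NT.ι zu zw, ?_⟩
          rw [LieHom.map_lie]
          have hmemA : ρ zw ∈ Asub := (hAmem _).mpr ⟨zw, hw1, rfl⟩
          have hystab : ∀ e ∈ Asub, ⁅ρ zu, e⁆ ∈ Asub := by
            intro e he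
            obtain ⟨z2, hz2, rfl⟩ := (hAmem e).mp he
            exact (hAmem _).mpr ⟨⁅zu, z2⁆, hNbr zu z2 _ hz2, LieHom.map_lie ρ zu z2⟩
          exact eig_bracket_apply_zero Asub cfun hv0 heig (ρ zu) hystab (ρ zw) hmemA
      | zero => exact ⟨0, by rw [map_zero], by rw [map_zero]; rfl⟩
      | add x y _ _ hx hy =>
          obtain ⟨z1, hz1, hv1⟩ := hx
          obtain ⟨z2, hz2, hv2⟩ := hy
          exact ⟨z1 + z2, by rw [map_add, hz1, hz2],
            by rw [map_add, LinearMap.add_apply, hv1, hv2, add_zero]⟩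
      | smul t x _ hx =>
          obtain ⟨z1, hz1, hv1⟩ := hx
          exact ⟨t • z1, by rw [map_smul, hz1],
            by rw [map_smul, LinearMap.smul_apply, hv1, smul_zero]⟩
    obtain ⟨zb, hzb, hzbv⟩ := claim b hb
    have hdiffmem : NT.ι (w - zb) ∈ idealI g D ((X - C a) ^ n) := by
      rw [map_sub, hzb]
      have : NT.ι w - b = k' := by rw [← hsum]; abel
      rwa [this]
    have hρdiff : ρ (w - zb) = 0 := hkill (w - zb) n le_rfl hdiffmem
    have : ρ w = ρ zb + ρ (w - zb) := by rw [map_sub]; abel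
    rw [← hρ_apply, this, LinearMap.add_apply, hzbv, hρdiff, LinearMap.zero_apply, add_zero]
  -- the common kernel of the ideal is a nonzero Lie submodule, hence everything
  let S₀ : LieSubmodule ℂ nt S :=
    { carrier := {s : S | ∀ w : nt, NT.ι w ∈ idealI g D (X - C a) → ⁅w, s⁆ = 0}
      add_mem' := by
        intro s1 s2 h1 h2 w hw
        rw [lie_add, h1 w hw, h2 w hw, add_zero]
      zero_mem' := by
        intro w hw
        rw [lie_zero]
      smul_mem' := by
        intro t s hs w hw
        rw [lie_smul, hs w hw, smul_zero]
      lie_mem := by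
        intro u s hs w hw
        rw [leibniz_lie]
        have h1 : NT.ι ⁅w, u⁆ ∈ idealI g D (X - C a) := by
          rw [LieHom.map_lie, ← lie_skew]
          refine Submodule.neg_mem _ ?_
          exact lie_ntModel_idealI D _ _ (hι_mem u) _ hw
        rw [hs ⁅w, u⁆ h1, hs w hw, lie_zero, add_zero] }
  have hvS0 : v ∈ S₀ := hv_killed
  have hS0top : ∀ s : S, s ∈ S₀ := by
    rcases hirr.eq_bot_or_eq_top S₀ with h | h
    · exfalso
      rw [h] at hvS0
      exact hv0 ((LieSubmodule.mem_bot _).mp hvS0)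
    · intro s
      rw [h]
      trivial
  have hE : ∀ w : nt, NT.ι w ∈ idealI g D (X - C a) → ∀ s : S, ⁅w, s⁆ = 0 := by
    intro w hw s
    exact hS0top s w hw
  -- conclusion
  intro z
  constructor
  · intro hz
    have hsurjX : ∀ x : g, ∃ zx : nt, NT.ι zx = a⁻¹ • ((X : Polynomial ℂ) ⊗ₜ[ℂ] x) := by
      intro x
      exact hι_surj _ (Submodule.smul_mem _ _ (memNt_X D x))
    choose jmap hjmap using hsurjX
    have hdiff : ∀ w : nt, ∀ s : S, ⁅w - jmap (ev g a (NT.ι w)), s⁆ = 0 := by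
      intro w s
      refine hE _ ?_ s
      rw [map_sub, hjmap]
      refine mem_idealI_of_ev_zero D ha ?_ ?_
      · exact Submodule.sub_mem _ (hι_mem w) (Submodule.smul_mem _ _ (memNt_X D _))
      · rw [map_sub, map_smul, ev_tmul, Polynomial.eval_X, smul_smul,
          inv_mul_cancel₀ ha, one_smul, sub_self]
    let Gann : LieIdeal ℂ g :=
      { carrier := {x : g | ∀ s : S, ⁅jmap x, s⁆ = 0}
        add_mem' := by
          intro x y hx hy s
          have hadd : jmap (x + y) = jmap x + jmap y := by
            apply NT.inj
            rw [map_add, hjmap, hjmap, hjmap, TensorProduct.tmul_add, smul_add]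
          rw [hadd, add_lie, hx s, hy s, add_zero]
        zero_mem' := by
          intro s
          have h0 : jmap 0 = 0 := by
            apply NT.inj
            rw [map_zero, hjmap, TensorProduct.tmul_zero, smul_zero]
          rw [h0, zero_lie]
        smul_mem' := by
          intro t x hx s
          have hsmul : jmap (t • x) = t • jmap x := by
            apply NT.inj
            rw [map_smul, hjmap, hjmap, TensorProduct.tmul_smul, smul_comm]
          rw [hsmul, smul_lie, hx s, smul_zero]
        lie_mem := by
          intro y x hx s
          have hδ2 : ∀ s : S, ⁅⁅jmap y, jmap x⁆ - jmap ⁅y, x⁆, s⁆ = 0 := by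
            intro s
            refine hE _ ?_ s
            rw [map_sub, LieHom.map_lie, hjmap, hjmap, hjmap]
            have hb : ⁅a⁻¹ • ((X : Polynomial ℂ) ⊗ₜ[ℂ] y), a⁻¹ • ((X : Polynomial ℂ) ⊗ₜ[ℂ] x)⁆
                = (a⁻¹ * a⁻¹) • (((X * X : Polynomial ℂ)) ⊗ₜ[ℂ] ⁅y, x⁆) := by
              have hb1 := smul_lie a⁻¹ ((X : Polynomial ℂ) ⊗ₜ[ℂ] y)
                (a⁻¹ • ((X : Polynomial ℂ) ⊗ₜ[ℂ] x))
              have hb2 := lie_smul a⁻¹ ((X : Polynomial ℂ) ⊗ₜ[ℂ] y) ((X : Polynomial ℂ) ⊗ₜ[ℂ] x)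
              rw [hb1, hb2, smul_smul]
              rfl
            rw [hb]
            have hcomb : (a⁻¹ * a⁻¹) • (((X * X : Polynomial ℂ)) ⊗ₜ[ℂ] ⁅y, x⁆)
                - a⁻¹ • ((X : Polynomial ℂ) ⊗ₜ[ℂ] ⁅y, x⁆)
                = ((a⁻¹ * a⁻¹) • (X * X : Polynomial ℂ) - a⁻¹ • (X : Polynomial ℂ))
                    ⊗ₜ[ℂ] ⁅y, x⁆ := by
              rw [TensorProduct.sub_tmul, TensorProduct.smul_tmul', TensorProduct.smul_tmul']
            rw [hcomb]
            have hpoly : (a⁻¹ * a⁻¹) • (X * X : Polynomial ℂ) - a⁻¹ • (X : Polynomial ℂ)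
                = (a⁻¹ * a⁻¹) • (X * (X - C a) * 1) := by
              have ha2 : a⁻¹ * a⁻¹ * a = a⁻¹ := by field_simp
              rw [Polynomial.smul_eq_C_mul, Polynomial.smul_eq_C_mul, Polynomial.smul_eq_C_mul]
              rw [show (C (a⁻¹ * a⁻¹)) * (X * (X - C a) * 1)
                  = C (a⁻¹ * a⁻¹) * (X * X) - C (a⁻¹ * a⁻¹) * C a * X by ring]
              rw [← Polynomial.C_mul, ha2]
            rw [hpoly, ← TensorProduct.smul_tmul']
            exact Submodule.smul_mem _ _ (memI_any D ⁅y, x⁆ (X - C a) 1)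
          have h1 : ⁅jmap ⁅y, x⁆, s⁆ = ⁅⁅jmap y, jmap x⁆, s⁆ := by
            have h2 := hδ2 s
            rw [sub_lie, sub_eq_zero] at h2
            exact h2.symm
          rw [h1, lie_lie, hx s, lie_zero, hx ⁅jmap y, s⁆, sub_zero] }
    have hGmem : ∀ x : g, x ∈ Gann ↔ ∀ s : S, ⁅jmap x, s⁆ = 0 := fun x => Iff.rfl
    rcases LieAlgebra.IsSimple.eq_bot_or_eq_top (R := ℂ) Gann with h | h
    · have hxG : ev g a (NT.ι z) ∈ Gann := by
        rw [hGmem]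
        intro s
        have hd := hdiff z s
        rw [sub_lie, hz s, zero_sub, neg_eq_zero] at hd
        exact hd
      rw [h] at hxG
      have hx0 : ev g a (NT.ι z) = 0 := (LieSubmodule.mem_bot _).mp hxG
      exact mem_idealI_of_ev_zero D ha (hι_mem z) hx0
    · exfalso
      apply hz0
      have h1 : ⁅jmap (ev g a (NT.ι z0)), s0⁆ = 0 := by
        have hm : ev g a (NT.ι z0) ∈ Gann := by rw [h]; trivial
        exact (hGmem _).mp hm s0
      have h2 := hdiff z0 s0
      rw [sub_lie, h1, sub_zero] at h2
      exact h2
  · intro hz s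
    exact hE z hz s

end AffinePaper
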